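/- Let α > 0 be fixed. Then E[tr((Σ (XᵗX + αI)⁻²)²)] = O(p⁻⁴) as p → ∞; that is, there exist a constant C > 0 and an integer p₀ such that for all p ≥ p₀, E[tr((Σ (XᵗX + αI)⁻²)²)] ≤ C/p⁴. -/

import Mathlib

open MeasureTheory ProbabilityTheory Matrix Filter

instance matrixMeasurableSpace {m n : ℕ} : MeasurableSpace (Matrix (Fin m) (Fin n) ℝ) :=
  inferInstanceAs (MeasurableSpace (Fin m → Fin n → ℝ))

/-- Law of a `p × n` random matrix with i.i.d. standard Gaussian entries. -/
noncomputable def stdGaussianMatrix (p n : ℕ) : Measure (Matrix (Fin p) (Fin n) ℝ) :=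
  Measure.pi (fun _ : Fin p => Measure.pi (fun _ : Fin n => gaussianReal 0 1))

/-- Law of a `p × n` random matrix whose rows are i.i.d. mean-zero Gaussian vectors
with covariance `S` (realized as standard Gaussian matrix times the square root of `S`). -/
noncomputable def gaussianRowsMatrix (p n : ℕ) (S : Matrix (Fin n) (Fin n) ℝ)
    (hS : S.PosDef) : Measure (Matrix (Fin p) (Fin n) ℝ) :=
  (stdGaussianMatrix p n).map (fun Z => Z * (hS.posSemidef.1.eigenvectorUnitary.1 *
    diagonal (fun i => Real.sqrt (hS.posSemidef.1.eigenvalues i)) *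
    (star hS.posSemidef.1.eigenvectorUnitary : Matrix (Fin n) (Fin n) ℝ)))

instance matrixBorelSpace {m n : ℕ} : BorelSpace (Matrix (Fin m) (Fin n) ℝ) :=
  inferInstanceAs (BorelSpace (Fin m → Fin n → ℝ))

namespace RMT
open scoped ENNReal NNReal
variable {n : ℕ}

lemma conjT_eq_transpose (M : Matrix (Fin n) (Fin n) ℝ) : Mᴴ = Mᵀ :=
  Matrix.conjTranspose_eq_transpose_of_trivial M

lemma psd_diag_nonneg {A : Matrix (Fin n) (Fin n) ℝ} (hA : A.PosSemidef) (i : Fin n) :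
    0 ≤ A i i := by
  have h := hA.dotProduct_mulVec_nonneg (Pi.single i 1)
  simpa [Matrix.mulVec_single, dotProduct, Pi.single_apply] using h

lemma trace_nonneg' {A : Matrix (Fin n) (Fin n) ℝ} (hA : A.PosSemidef) : 0 ≤ A.trace := by
  rw [Matrix.trace]
  exact Finset.sum_nonneg fun i _ => psd_diag_nonneg hA i

lemma trace_mul_nonneg {A B : Matrix (Fin n) (Fin n) ℝ} (hA : A.PosSemidef)
    (hB : B.PosSemidef) : 0 ≤ (A * B).trace := by
  obtain ⟨P, rfl⟩ : ∃ P : Matrix (Fin n) (Fin n) ℝ, A = star P * P := by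
    open scoped MatrixOrder in exact CStarAlgebra.nonneg_iff_eq_star_mul_self.mp hA.nonneg
  rw [← Matrix.trace_mul_cycle]
  exact trace_nonneg' (hB.mul_mul_conjTranspose_same P)

lemma trace_le_of_psd_sub {A B : Matrix (Fin n) (Fin n) ℝ} (h : (B - A).PosSemidef) :
    A.trace ≤ B.trace := by
  have := trace_nonneg' h
  rw [Matrix.trace_sub] at this
  linarith

lemma psd_smul {A : Matrix (Fin n) (Fin n) ℝ} (hA : A.PosSemidef) {r : ℝ} (hr : 0 ≤ r) :
    (r • A).PosSemidef := by
  refine Matrix.PosSemidef.of_dotProduct_mulVec_nonneg ?_ (fun x => ?_)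
  · unfold Matrix.IsHermitian
    rw [Matrix.conjTranspose_smul, hA.1]
    simp
  · have h := hA.dotProduct_mulVec_nonneg x
    rw [Matrix.smul_mulVec]
    simp only [dotProduct_smul, smul_eq_mul]
    exact mul_nonneg hr h

section spectral
variable {A : Matrix (Fin n) (Fin n) ℝ} (hA : A.IsHermitian)

lemma unitary_conj_psd {d : Fin n → ℝ} (hd : ∀ i, 0 ≤ d i)
    (U : Matrix (Fin n) (Fin n) ℝ) :
    (U * Matrix.diagonal d * star U).PosSemidef := by
  have h1 : (Matrix.diagonal d).PosSemidef := Matrix.PosSemidef.diagonal hd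
  simpa [Matrix.star_eq_conjTranspose] using h1.mul_mul_conjTranspose_same U

lemma smul_one_conj (U : Matrix (Fin n) (Fin n) ℝ) (hU : U ∈ Matrix.unitaryGroup (Fin n) ℝ)
    (t : ℝ) : (t • (1 : Matrix (Fin n) (Fin n) ℝ)) = U * (t • 1) * star U := by
  have h : U * star U = 1 := (Matrix.mem_unitaryGroup_iff).mp hU
  rw [Matrix.mul_smul, mul_one, Matrix.smul_mul, h]

include hA in
lemma smul_one_sub_psd {t : ℝ} (h : ∀ i, hA.eigenvalues i ≤ t) :
    (t • (1 : Matrix (Fin n) (Fin n) ℝ) - A).PosSemidef := by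
  have hU := (hA.eigenvectorUnitary).2
  have hdiag : A = (hA.eigenvectorUnitary : Matrix (Fin n) (Fin n) ℝ)
      * Matrix.diagonal (RCLike.ofReal ∘ hA.eigenvalues)
      * star (hA.eigenvectorUnitary : Matrix (Fin n) (Fin n) ℝ) := hA.spectral_theorem
  set U : Matrix (Fin n) (Fin n) ℝ := (hA.eigenvectorUnitary : Matrix (Fin n) (Fin n) ℝ) with hUdef
  have hd1 : (t • (1 : Matrix (Fin n) (Fin n) ℝ))
      - Matrix.diagonal (RCLike.ofReal ∘ hA.eigenvalues)
      = Matrix.diagonal (fun i => t - hA.eigenvalues i) := by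
    rw [Matrix.smul_one_eq_diagonal, Matrix.diagonal_sub]
    congr 1
  have key : t • (1 : Matrix (Fin n) (Fin n) ℝ) - A
      = U * Matrix.diagonal (fun i => t - hA.eigenvalues i) * star U := by
    conv_lhs => rw [hdiag, smul_one_conj U hU t]
    rw [← Matrix.sub_mul, ← Matrix.mul_sub, hd1]
  rw [key]
  exact unitary_conj_psd (fun i => by simpa using sub_nonneg.mpr (h i)) _

include hA in
lemma sub_smul_one_psd {t : ℝ} (h : ∀ i, t ≤ hA.eigenvalues i) :
    (A - t • (1 : Matrix (Fin n) (Fin n) ℝ)).PosSemidef := by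
  set U : Matrix (Fin n) (Fin n) ℝ := (hA.eigenvectorUnitary : Matrix (Fin n) (Fin n) ℝ) with hUdef
  have hU := (hA.eigenvectorUnitary).2
  have hdiag : A = U * Matrix.diagonal (RCLike.ofReal ∘ hA.eigenvalues) * star U :=
    hA.spectral_theorem
  have hd1 : Matrix.diagonal (RCLike.ofReal ∘ hA.eigenvalues)
      - (t • (1 : Matrix (Fin n) (Fin n) ℝ))
      = Matrix.diagonal (fun i => hA.eigenvalues i - t) := by
    rw [Matrix.smul_one_eq_diagonal, Matrix.diagonal_sub]
    congr 1
  have key : A - t • (1 : Matrix (Fin n) (Fin n) ℝ)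
      = U * Matrix.diagonal (fun i => hA.eigenvalues i - t) * star U := by
    conv_lhs => rw [hdiag, smul_one_conj U hU t]
    rw [← Matrix.sub_mul, ← Matrix.mul_sub, hd1]
  rw [key]
  exact unitary_conj_psd (fun i => by simpa using sub_nonneg.mpr (h i)) _

include hA in
lemma pow_spectral (k : ℕ) :
    A ^ k = (hA.eigenvectorUnitary : Matrix (Fin n) (Fin n) ℝ)
      * Matrix.diagonal (RCLike.ofReal ∘ hA.eigenvalues) ^ k
      * star (hA.eigenvectorUnitary : Matrix (Fin n) (Fin n) ℝ) := by
  set U : Matrix (Fin n) (Fin n) ℝ := (hA.eigenvectorUnitary : Matrix (Fin n) (Fin n) ℝ)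
  set D : Matrix (Fin n) (Fin n) ℝ := Matrix.diagonal (RCLike.ofReal ∘ hA.eigenvalues)
  have hU1 : U * star U = 1 := (Matrix.mem_unitaryGroup_iff).mp (hA.eigenvectorUnitary).2
  have hU2 : star U * U = 1 := mul_eq_one_comm.mp hU1
  induction k with
  | zero => simp [hU1]
  | succ k ih =>
    rw [pow_succ, ih, pow_succ, hA.spectral_theorem]
    show U * D ^ k * star U * (U * D * star U) = U * (D ^ k * D) * star U
    rw [Matrix.mul_assoc (U * D ^ k) (star U) _, ← Matrix.mul_assoc (star U) (U * D) _,
      ← Matrix.mul_assoc (star U) U D, hU2, Matrix.one_mul]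
    simp only [Matrix.mul_assoc]

include hA in
lemma trace_pow_eq (k : ℕ) : (A ^ k).trace = ∑ i, (hA.eigenvalues i) ^ k := by
  have hU1 : (hA.eigenvectorUnitary : Matrix (Fin n) (Fin n) ℝ)
      * star (hA.eigenvectorUnitary : Matrix (Fin n) (Fin n) ℝ) = 1 :=
    (Matrix.mem_unitaryGroup_iff).mp (hA.eigenvectorUnitary).2
  rw [pow_spectral hA k, Matrix.trace_mul_cycle, mul_eq_one_comm.mp hU1, Matrix.one_mul]
  rw [Matrix.diagonal_pow, Matrix.trace_diagonal]
  congr 1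

lemma trace_eq_sum_eig : A.trace = ∑ i, hA.eigenvalues i := by
  have := trace_pow_eq hA 1
  simpa using this

/-- Main deterministic bound. -/
lemma det_bound {S A : Matrix (Fin n) (Fin n) ℝ} (hS : S.PosSemidef) (hA : A.PosDef)
    {β : ℝ} (hβ : 0 < β) (hAβ : (A - β • (1 : Matrix (Fin n) (Fin n) ℝ)).PosSemidef) :
    0 ≤ ((S * (A⁻¹) ^ 2) ^ 2).trace ∧
    ((S * (A⁻¹) ^ 2) ^ 2).trace ≤ n * S.trace ^ 2 / β ^ 4 := by
  classical
  set B := A⁻¹ with hBdef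
  have hB : B.PosDef := hA.inv
  have hBpsd : B.PosSemidef := hB.posSemidef
  have hBH : Bᴴ = B := hBpsd.1
  set C := B * S * B with hCdef
  have hC : C.PosSemidef := by
    have := hS.mul_mul_conjTranspose_same B
    rwa [hBH] at this
  have htr : ((S * B ^ 2) ^ 2).trace = (C * C).trace := by
    rw [pow_two, pow_two]
    have e1 : S * (B * B) * (S * (B * B)) = (S * B) * ((B * S * B) * B) := by
      simp only [Matrix.mul_assoc]
    rw [e1, Matrix.trace_mul_comm]
    simp only [hCdef, Matrix.mul_assoc]
  have hgnn : 0 ≤ ((S * B ^ 2) ^ 2).trace := by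
    rw [htr]; exact trace_mul_nonneg hC hC
  refine ⟨hgnn, ?_⟩
  set s := S.trace with hsdef
  have hs : 0 ≤ s := trace_nonneg' hS
  -- S ⪯ s • 1
  have hS1 : (s • (1 : Matrix (Fin n) (Fin n) ℝ) - S).PosSemidef := by
    refine smul_one_sub_psd hS.1 (fun i => ?_)
    rw [hsdef, trace_eq_sum_eig hS.1]
    exact Finset.single_le_sum (fun j _ => hS.eigenvalues_nonneg j) (Finset.mem_univ i)
  -- C ⪯ s • B^2
  have hCB : (s • B ^ 2 - C).PosSemidef := by
    have h1 := hS1.mul_mul_conjTranspose_same B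
    rw [hBH] at h1
    have e : B * (s • (1 : Matrix (Fin n) (Fin n) ℝ) - S) * B = s • B ^ 2 - C := by
      rw [Matrix.mul_sub, Matrix.sub_mul, Matrix.mul_smul, Matrix.mul_one, Matrix.smul_mul,
        pow_two, hCdef]
    rwa [e] at h1
  -- tr(C*C) ≤ s * tr(S*B^4)
  have t1 : (C * C).trace ≤ s * (S * B ^ 4).trace := by
    have h0 := trace_mul_nonneg hC hCB
    rw [Matrix.mul_sub, Matrix.trace_sub, Matrix.mul_smul, Matrix.trace_smul] at h0
    have e2 : (C * B ^ 2).trace = (S * B ^ 4).trace := by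
      have : C * B ^ 2 = B * (S * B ^ 3) := by
        rw [hCdef]; rw [pow_two, pow_succ, pow_two]; simp only [Matrix.mul_assoc]
      rw [this, Matrix.trace_mul_comm]
      rw [show S * B ^ 3 * B = S * B ^ 4 by rw [Matrix.mul_assoc, ← pow_succ]]
    rw [e2] at h0
    simp only [smul_eq_mul] at h0
    linarith
  -- tr(S*B^4) ≤ s * tr(B^4)
  have t2 : (S * B ^ 4).trace ≤ s * (B ^ 4).trace := by
    have h0 := trace_mul_nonneg hS1 (hBpsd.pow 4)
    rw [Matrix.sub_mul, Matrix.trace_sub, Matrix.smul_mul, Matrix.trace_smul,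
      Matrix.one_mul] at h0
    simp only [smul_eq_mul] at h0
    linarith
  -- eigenvalues of B are ≤ β⁻¹
  have hAdet : IsUnit A.det := isUnit_iff_ne_zero.mpr (ne_of_gt hA.det_pos)
  have hEig : ∀ i, hB.isHermitian.eigenvalues i ≤ β⁻¹ := by
    intro i
    set v : Fin n → ℝ := (WithLp.equiv 2 _) (hB.isHermitian.eigenvectorBasis i) with hvdef
    set μ := hB.isHermitian.eigenvalues i with hμdef
    have hμpos : 0 < μ := hB.eigenvalues_pos i
    have hBv : B *ᵥ v = μ • v := hB.isHermitian.mulVec_eigenvectorBasis i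
    have hnorm : ‖hB.isHermitian.eigenvectorBasis i‖ = 1 :=
      hB.isHermitian.eigenvectorBasis.orthonormal.1 i
    have hvv : v ⬝ᵥ v = 1 := by
      have h2 : ‖hB.isHermitian.eigenvectorBasis i‖ ^ 2 = 1 := by rw [hnorm]; norm_num
      rw [EuclideanSpace.norm_eq] at h2
      rw [Real.sq_sqrt (by positivity)] at h2
      rw [dotProduct]
      convert h2 using 1
      apply Finset.sum_congr rfl
      intro j _
      simp [hvdef, Real.norm_eq_abs, ← sq, sq_abs]
    have hAv : A *ᵥ v = μ⁻¹ • v := by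
      have h1 : A *ᵥ (B *ᵥ v) = v := by
        rw [Matrix.mulVec_mulVec, Matrix.mul_nonsing_inv A hAdet, Matrix.one_mulVec]
      rw [hBv, Matrix.mulVec_smul] at h1
      have := congrArg (fun w => μ⁻¹ • w) h1
      simpa [smul_smul, inv_mul_cancel₀ (ne_of_gt hμpos)] using this
    have hq := hAβ.dotProduct_mulVec_nonneg v
    have hqv : star v ⬝ᵥ ((A - β • (1 : Matrix (Fin n) (Fin n) ℝ)) *ᵥ v) = μ⁻¹ - β := by
      rw [Matrix.sub_mulVec, hAv]
      rw [show (β • (1 : Matrix (Fin n) (Fin n) ℝ)) *ᵥ v = β • v by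
        rw [Matrix.smul_mulVec, Matrix.one_mulVec]]
      rw [dotProduct_sub, dotProduct_smul, dotProduct_smul]
      simp only [star_trivial, hvv, smul_eq_mul, mul_one]
    rw [hqv] at hq
    have hβμ : β ≤ μ⁻¹ := by linarith
    calc μ = (μ⁻¹)⁻¹ := by rw [inv_inv]
    _ ≤ β⁻¹ := by
      apply inv_anti₀ hβ hβμ
  -- tr(B^4) ≤ n * β⁻¹^4
  have t3 : (B ^ 4).trace ≤ n * β⁻¹ ^ 4 := by
    rw [trace_pow_eq hB.isHermitian 4]
    have : ∀ i ∈ Finset.univ, (hB.isHermitian.eigenvalues i) ^ 4 ≤ β⁻¹ ^ 4 := by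
      intro i _
      exact pow_le_pow_left₀ (le_of_lt (hB.eigenvalues_pos i)) (hEig i) 4
    calc ∑ i, (hB.isHermitian.eigenvalues i) ^ 4 ≤ ∑ _i : Fin n, β⁻¹ ^ 4 :=
      Finset.sum_le_sum this
    _ = n * β⁻¹ ^ 4 := by simp [Finset.sum_const, mul_comm]
  calc ((S * B ^ 2) ^ 2).trace = (C * C).trace := htr
  _ ≤ s * (S * B ^ 4).trace := t1
  _ ≤ s * (s * (B ^ 4).trace) := by
      apply mul_le_mul_of_nonneg_left t2 hs
  _ ≤ s * (s * (n * β⁻¹ ^ 4)) := by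
      apply mul_le_mul_of_nonneg_left _ hs
      apply mul_le_mul_of_nonneg_left t3 hs
  _ = n * s ^ 2 / β ^ 4 := by field_simp

end spectral

noncomputable def sqrtM {S : Matrix (Fin n) (Fin n) ℝ} (hS : S.PosDef) : Matrix (Fin n) (Fin n) ℝ :=
  hS.posSemidef.1.eigenvectorUnitary.1 *
    diagonal (fun i => Real.sqrt (hS.posSemidef.1.eigenvalues i)) *
    (star hS.posSemidef.1.eigenvectorUnitary : Matrix (Fin n) (Fin n) ℝ)

lemma sqrtM_psd {S : Matrix (Fin n) (Fin n) ℝ} (hS : S.PosDef) : (sqrtM hS).PosSemidef :=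
  unitary_conj_psd (fun i => Real.sqrt_nonneg _) _

lemma sqrtM_mul_self {S : Matrix (Fin n) (Fin n) ℝ} (hS : S.PosDef) : sqrtM hS * sqrtM hS = S := by
  have hU1 : (hS.posSemidef.1.eigenvectorUnitary : Matrix (Fin n) (Fin n) ℝ)
      * star (hS.posSemidef.1.eigenvectorUnitary : Matrix (Fin n) (Fin n) ℝ) = 1 :=
    (Matrix.mem_unitaryGroup_iff).mp (hS.posSemidef.1.eigenvectorUnitary).2
  have hU2 := mul_eq_one_comm.mp hU1
  conv_rhs => rw [hS.posSemidef.1.spectral_theorem, Unitary.conjStarAlgAut_apply]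
  unfold sqrtM
  rw [Matrix.mul_assoc (_ * _) (star _) _, ← Matrix.mul_assoc (star _) (_ * _) _,
    ← Matrix.mul_assoc (star _) _ (diagonal _), hU2, Matrix.one_mul,
    ← Matrix.mul_assoc (_ * _) (diagonal _) _,
    Matrix.mul_assoc _ (diagonal _) (diagonal _), diagonal_mul_diagonal]
  congr 3
  funext i
  simp [Real.mul_self_sqrt (hS.posSemidef.eigenvalues_nonneg i)]

lemma goodEvent {p : ℕ} (hn : 0 < n) (Z : Matrix (Fin p) (Fin n) ℝ)
    (hE : ∀ i j, |(Zᵀ * Z) i j - (if i = j then (p : ℝ) else 0)| ≤ p / (2 * n)) :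
    (Zᵀ * Z - ((p : ℝ) / 2) • (1 : Matrix (Fin n) (Fin n) ℝ)).PosSemidef := by
  classical
  set T := Zᵀ * Z with hTdef
  have hTH : T.IsHermitian := by
    have := Matrix.isHermitian_conjTranspose_mul_self Z
    rwa [Matrix.conjTranspose_eq_transpose_of_trivial] at this
  refine Matrix.PosSemidef.of_dotProduct_mulVec_nonneg ?_ ?_
  · unfold Matrix.IsHermitian
    rw [Matrix.conjTranspose_sub, hTH, Matrix.conjTranspose_smul, Matrix.conjTranspose_one]
    simp
  · intro x
    simp only [star_trivial]
    set S1 := ∑ i, x i ^ 2 with hS1def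
    have hS1nn : 0 ≤ S1 := Finset.sum_nonneg fun i _ => sq_nonneg _
    have hxx : x ⬝ᵥ x = S1 := by
      simp [dotProduct, hS1def, sq]
    have expand : x ⬝ᵥ ((T - ((p : ℝ) / 2) • 1) *ᵥ x)
        = x ⬝ᵥ (T *ᵥ x) - ((p : ℝ) / 2) * S1 := by
      rw [Matrix.sub_mulVec, dotProduct_sub, Matrix.smul_mulVec,
        Matrix.one_mulVec, dotProduct_smul, hxx]
      simp
    have hquad : x ⬝ᵥ (T *ᵥ x) = ∑ i, ∑ j, x i * (T i j * x j) := by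
      simp [dotProduct, Matrix.mulVec, Finset.mul_sum]
    set E : Fin n → Fin n → ℝ := fun i j => T i j - (if i = j then (p : ℝ) else 0) with hEdef
    have split : ∑ i, ∑ j, x i * (T i j * x j)
        = (∑ i, ∑ j, x i * (E i j * x j)) + p * S1 := by
      have : ∀ i j, x i * (T i j * x j)
          = x i * (E i j * x j) + x i * ((if i = j then (p : ℝ) else 0) * x j) := by
        intro i j; simp only [hEdef]; ring
      simp only [this, Finset.sum_add_distrib]
      congr 1
      have : ∀ i, ∑ j, x i * ((if i = j then (p : ℝ) else 0) * x j)
          = (p : ℝ) * x i ^ 2 := by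
        intro i
        rw [Finset.sum_eq_single i]
        · simp; ring
        · intro b _ hb; simp [Ne.symm hb]
        · intro h; exact absurd (Finset.mem_univ i) h
      rw [Finset.sum_congr rfl (fun i _ => this i), hS1def, Finset.mul_sum]
    have habs : |∑ i, ∑ j, x i * (E i j * x j)| ≤ ((p : ℝ) / (2 * n)) * ((∑ i, |x i|) ^ 2) := by
      have hpn : (0 : ℝ) ≤ (p : ℝ) / (2 * n) := by positivity
      calc |∑ i, ∑ j, x i * (E i j * x j)| ≤ ∑ i, |∑ j, x i * (E i j * x j)| :=
        Finset.abs_sum_le_sum_abs _ _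
      _ ≤ ∑ i, ∑ j, |x i * (E i j * x j)| :=
        Finset.sum_le_sum fun i _ => Finset.abs_sum_le_sum_abs _ _
      _ ≤ ∑ i, ∑ j, |x i| * (((p : ℝ) / (2 * n)) * |x j|) := by
        refine Finset.sum_le_sum fun i _ => Finset.sum_le_sum fun j _ => ?_
        rw [abs_mul, abs_mul]
        refine mul_le_mul_of_nonneg_left ?_ (abs_nonneg _)
        exact mul_le_mul_of_nonneg_right (hE i j) (abs_nonneg _)
      _ = ((p : ℝ) / (2 * n)) * ((∑ i, |x i|) ^ 2) := by
        rw [sq, Finset.sum_mul_sum]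
        rw [Finset.mul_sum]
        refine Finset.sum_congr rfl fun i _ => ?_
        rw [Finset.mul_sum]
        refine Finset.sum_congr rfl fun j _ => ?_
        ring
    have hcs : (∑ i, |x i|) ^ 2 ≤ (n : ℝ) * S1 := by
      have := sq_sum_le_card_mul_sum_sq (s := (Finset.univ : Finset (Fin n)))
        (f := fun i => |x i|)
      simpa [sq_abs, hS1def] using this
    have hEineq : -((p : ℝ) / 2 * S1) ≤ ∑ i, ∑ j, x i * (E i j * x j) := by
      have h1 : ((p : ℝ) / (2 * n)) * ((∑ i, |x i|) ^ 2)
          ≤ ((p : ℝ) / (2 * n)) * ((n : ℝ) * S1) := by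
        apply mul_le_mul_of_nonneg_left hcs (by positivity)
      have h2 : ((p : ℝ) / (2 * n)) * ((n : ℝ) * S1) = (p : ℝ) / 2 * S1 := by
        field_simp
      have := (abs_le.mp habs).1
      linarith
    rw [expand, hquad, split]
    have hp0 : (0:ℝ) ≤ p := Nat.cast_nonneg p
    nlinarith [hEineq, hS1nn]

/-- On the good event, the trace quantity is small. -/
lemma pointwise_good {p : ℕ} (hn : 0 < n) (hp : 0 < p) {S : Matrix (Fin n) (Fin n) ℝ}
    (hS : S.PosDef) {α : ℝ} (hα : 0 < α) {c : ℝ} (hc : 0 < c)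
    (hcS : (S - c • (1 : Matrix (Fin n) (Fin n) ℝ)).PosSemidef)
    (Z : Matrix (Fin p) (Fin n) ℝ)
    (hE : ∀ i j, |(Zᵀ * Z) i j - (if i = j then (p : ℝ) else 0)| ≤ p / (2 * n)) :
    ((S * (((Z * sqrtM hS)ᵀ * (Z * sqrtM hS)
        + α • (1 : Matrix (Fin n) (Fin n) ℝ))⁻¹) ^ 2) ^ 2).trace
      ≤ n * S.trace ^ 2 / ((c / 2) ^ 4 * p ^ 4) := by
  classical
  set R := sqrtM hS with hRdef
  set X := Z * R with hXdef
  have hR : R.PosSemidef := sqrtM_psd hS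
  have hRT : Rᵀ = R := by
    rw [← Matrix.conjTranspose_eq_transpose_of_trivial, hR.1]
  have hXX : Xᵀ * X = R * (Zᵀ * Z) * R := by
    rw [hXdef, Matrix.transpose_mul, hRT]
    simp only [Matrix.mul_assoc]
  set A := Xᵀ * X + α • (1 : Matrix (Fin n) (Fin n) ℝ) with hAdef
  have hXXpsd : (Xᵀ * X).PosSemidef := by
    have := Matrix.posSemidef_conjTranspose_mul_self X
    rwa [Matrix.conjTranspose_eq_transpose_of_trivial] at this
  have hα1 : (α • (1 : Matrix (Fin n) (Fin n) ℝ)).PosDef := by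
    rw [Matrix.smul_one_eq_diagonal]
    rw [Matrix.posDef_diagonal_iff]
    exact fun _ => hα
  have hA : A.PosDef := by
    rw [hAdef, add_comm]
    exact hα1.add_posSemidef hXXpsd
  set β := (c / 2) * p with hβdef
  have hβ : 0 < β := by positivity
  have hgood := goodEvent hn Z hE
  have h1 : (R * (Zᵀ * Z - ((p : ℝ) / 2) • 1) * R).PosSemidef := by
    have := hgood.mul_mul_conjTranspose_same R
    rwa [Matrix.conjTranspose_eq_transpose_of_trivial, hRT] at this
  have e1 : R * (Zᵀ * Z - ((p : ℝ) / 2) • 1) * R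
      = Xᵀ * X - ((p : ℝ) / 2) • S := by
    rw [Matrix.mul_sub, Matrix.sub_mul, hXX]
    congr 1
    rw [Matrix.mul_smul, Matrix.smul_mul, Matrix.mul_one, sqrtM_mul_self hS]
  have h2 : (((p : ℝ) / 2) • (S - c • (1 : Matrix (Fin n) (Fin n) ℝ))).PosSemidef :=
    psd_smul hcS (by positivity)
  have e2 : ((p : ℝ) / 2) • (S - c • (1 : Matrix (Fin n) (Fin n) ℝ))
      = ((p : ℝ) / 2) • S - β • (1 : Matrix (Fin n) (Fin n) ℝ) := by
    rw [smul_sub, smul_smul, hβdef]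
    congr 2
    ring
  have h3 : (Xᵀ * X - β • (1 : Matrix (Fin n) (Fin n) ℝ)).PosSemidef := by
    have := (h1.add h2)
    rw [e1, e2, sub_add_sub_cancel] at this
    exact this
  have h4 : (A - β • (1 : Matrix (Fin n) (Fin n) ℝ)).PosSemidef := by
    have := h3.add (psd_smul Matrix.PosSemidef.one hα.le)
    rw [hAdef]
    have e3 : Xᵀ * X - β • (1 : Matrix (Fin n) (Fin n) ℝ) + α • 1
        = Xᵀ * X + α • 1 - β • (1 : Matrix (Fin n) (Fin n) ℝ) := by abel
    rwa [e3] at this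
  have hb := (det_bound hS.posSemidef hA hβ h4).2
  calc ((S * (A⁻¹) ^ 2) ^ 2).trace ≤ n * S.trace ^ 2 / β ^ 4 := hb
  _ = n * S.trace ^ 2 / ((c / 2) ^ 4 * p ^ 4) := by rw [hβdef, mul_pow]

/-- Unconditional bound. -/
lemma pointwise_all {p : ℕ} {S : Matrix (Fin n) (Fin n) ℝ}
    (hS : S.PosDef) {α : ℝ} (hα : 0 < α) (Z : Matrix (Fin p) (Fin n) ℝ) :
    0 ≤ ((S * (((Z * sqrtM hS)ᵀ * (Z * sqrtM hS)
        + α • (1 : Matrix (Fin n) (Fin n) ℝ))⁻¹) ^ 2) ^ 2).trace ∧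
    ((S * (((Z * sqrtM hS)ᵀ * (Z * sqrtM hS)
        + α • (1 : Matrix (Fin n) (Fin n) ℝ))⁻¹) ^ 2) ^ 2).trace
      ≤ n * S.trace ^ 2 / α ^ 4 := by
  classical
  set X := Z * sqrtM hS with hXdef
  set A := Xᵀ * X + α • (1 : Matrix (Fin n) (Fin n) ℝ) with hAdef
  have hXXpsd : (Xᵀ * X).PosSemidef := by
    have := Matrix.posSemidef_conjTranspose_mul_self X
    rwa [Matrix.conjTranspose_eq_transpose_of_trivial] at this
  have hα1 : (α • (1 : Matrix (Fin n) (Fin n) ℝ)).PosDef := by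
    rw [Matrix.smul_one_eq_diagonal, Matrix.posDef_diagonal_iff]
    exact fun _ => hα
  have hA : A.PosDef := by
    rw [hAdef, add_comm]
    exact hα1.add_posSemidef hXXpsd
  have h4 : (A - α • (1 : Matrix (Fin n) (Fin n) ℝ)).PosSemidef := by
    rw [hAdef, add_sub_cancel_right]
    exact hXXpsd
  exact det_bound hS.posSemidef hA hα h4

lemma integral_pi_prod {ι : Type*} [Fintype ι] {E : Type*} [MeasurableSpace E]
    (μ1 : Measure E) [SigmaFinite μ1] (f : ι → E → ℝ) :
    ∫ x : ι → E, ∏ i, f i (x i) ∂(Measure.pi fun _ : ι => μ1) = ∏ i, ∫ x, f i x ∂μ1 := by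
  letI : MeasureSpace E := { volume := μ1 }
  exact MeasureTheory.integral_fintype_prod_eq_prod (fun i => f i)

lemma integrable_pi_prod {ι : Type*} [Fintype ι] {E : Type*} [MeasurableSpace E]
    (μ1 : Measure E) [SigmaFinite μ1] (f : ι → E → ℝ) (hf : ∀ i, Integrable (f i) μ1) :
    Integrable (fun x : ι → E => ∏ i, f i (x i)) (Measure.pi fun _ : ι => μ1) := by
  letI : MeasureSpace E := { volume := μ1 }
  exact Integrable.fintype_prod hf

/-! ### one-dimensional gaussian facts -/

lemma gauss_eq_withDensity : gaussianReal 0 1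
    = (volume : Measure ℝ).withDensity
        (fun x => (((gaussianPDFReal 0 1 x).toNNReal : ℝ≥0) : ℝ≥0∞)) := by
  rw [gaussianReal_of_var_ne_zero 0 one_ne_zero]
  rfl

lemma gauss_integral_eq (g : ℝ → ℝ) :
    ∫ x, g x ∂(gaussianReal 0 1) = ∫ x, gaussianPDFReal 0 1 x * g x := by
  rw [gauss_eq_withDensity,
    integral_withDensity_eq_integral_smul ((measurable_gaussianPDFReal 0 1).real_toNNReal) g]
  congr 1
  funext x
  rw [NNReal.smul_def, Real.coe_toNNReal _ (gaussianPDFReal_pos 0 1 x one_ne_zero).le]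
  simp

lemma gaussianPDFReal_eq (x : ℝ) :
    gaussianPDFReal 0 1 x = (Real.sqrt (2 * Real.pi))⁻¹ * Real.exp (-(1/2) * x ^ 2) := by
  simp only [gaussianPDFReal, NNReal.coe_one, mul_one, sub_zero]
  congr 1
  ring

lemma integrable_pow_mul_gauss_vol (m : ℕ) :
    Integrable (fun x : ℝ => x ^ m * Real.exp (-(1/2) * x ^ 2)) := by
  have h := integrable_rpow_mul_exp_neg_mul_sq (b := 1/2) (by norm_num)
    (s := (m : ℝ)) (lt_of_lt_of_le (by norm_num) (Nat.cast_nonneg m))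
  simpa [Real.rpow_natCast] using h

lemma integrable_pow_gauss (m : ℕ) : Integrable (fun x : ℝ => x ^ m) (gaussianReal 0 1) := by
  rw [gauss_eq_withDensity,
    integrable_withDensity_iff_integrable_smul ((measurable_gaussianPDFReal 0 1).real_toNNReal)]
  have : (fun x : ℝ => (Real.toNNReal (gaussianPDFReal 0 1 x) : ℝ≥0) • (x ^ m))
      = fun x => (Real.sqrt (2 * Real.pi))⁻¹ * (x ^ m * Real.exp (-(1/2) * x ^ 2)) := by
    funext x
    rw [NNReal.smul_def, Real.coe_toNNReal _ (gaussianPDFReal_pos 0 1 x one_ne_zero).le,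
      gaussianPDFReal_eq, smul_eq_mul]
    ring
  rw [this]
  exact (integrable_pow_mul_gauss_vol m).const_mul _

lemma gauss_mean_zero : ∫ x, x ∂(gaussianReal 0 1) = 0 := by
  rw [gauss_integral_eq]
  have hodd : ∀ x : ℝ, gaussianPDFReal 0 1 (-x) * (-x) = -(gaussianPDFReal 0 1 x * x) := by
    intro x
    rw [gaussianPDFReal_eq, gaussianPDFReal_eq]
    ring_nf
  have h := integral_neg_eq_self (fun x : ℝ => gaussianPDFReal 0 1 x * x) (volume : Measure ℝ)
  simp only [hodd, integral_neg] at h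
  linarith

lemma gauss_second_moment : ∫ x, x ^ 2 ∂(gaussianReal 0 1) = 1 := by
  rw [gauss_integral_eq]
  have key : ∫ x : ℝ, x ^ 2 * Real.exp (-(1/2) * x ^ 2) = Real.sqrt (2 * Real.pi) := by
    have hu : ∀ x : ℝ, HasDerivAt (fun y : ℝ => y) 1 x := fun x => hasDerivAt_id x
    have hv : ∀ x : ℝ, HasDerivAt (fun y : ℝ => -Real.exp (-(1/2) * y ^ 2))
        (x * Real.exp (-(1/2) * x ^ 2)) x := by
      intro x
      have h1 : HasDerivAt (fun y : ℝ => -(1/2) * y ^ 2)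
          (-(1/2) * ((2 : ℕ) * x ^ (2 - 1))) x := (hasDerivAt_pow 2 x).const_mul _
      have h2 := (h1.exp).neg
      refine h2.congr_deriv ?_
      push_cast
      ring
    have hint1 : Integrable (fun x : ℝ => x * (x * Real.exp (-(1/2) * x ^ 2))) := by
      have := integrable_pow_mul_gauss_vol 2
      apply this.congr
      filter_upwards with x; ring
    have hint2 : Integrable (fun x : ℝ => (1 : ℝ) * -Real.exp (-(1/2) * x ^ 2)) := by
      have h : Integrable (fun x : ℝ => Real.exp (-(1/2) * x ^ 2)) :=
        integrable_exp_neg_mul_sq (by norm_num)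
      apply h.neg.congr
      filter_upwards with x
      simp [Pi.neg_apply]
    have hint3 : Integrable (fun x : ℝ => x * -Real.exp (-(1/2) * x ^ 2)) := by
      have h := (integrable_pow_mul_gauss_vol 1).neg
      apply h.congr
      filter_upwards with x
      simp only [Pi.neg_apply, pow_one]
      ring
    have hibp := integral_mul_deriv_eq_deriv_mul_of_integrable (fun x _ => hu x) (fun x _ => hv x) hint1 hint2 hint3
    have hg : ∫ x : ℝ, Real.exp (-(1/2) * x ^ 2) = Real.sqrt (2 * Real.pi) := by
      have := integral_gaussian (1/2)
      rw [this]
      rw [show Real.pi / (1/2) = 2 * Real.pi by ring]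
    calc ∫ x : ℝ, x ^ 2 * Real.exp (-(1/2) * x ^ 2)
        = ∫ x : ℝ, x * (x * Real.exp (-(1/2) * x ^ 2)) := by
          congr 1; funext x; ring
    _ = -∫ x : ℝ, (1:ℝ) * -Real.exp (-(1/2) * x ^ 2) := hibp
    _ = ∫ x : ℝ, Real.exp (-(1/2) * x ^ 2) := by
        rw [← integral_neg]; congr 1; funext x; ring
    _ = Real.sqrt (2 * Real.pi) := hg
  have h2 : ∀ x : ℝ, gaussianPDFReal 0 1 x * x ^ 2
      = (Real.sqrt (2 * Real.pi))⁻¹ * (x ^ 2 * Real.exp (-(1/2) * x ^ 2)) := by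
    intro x; rw [gaussianPDFReal_eq]; ring
  simp only [h2]
  rw [integral_const_mul, key]
  have : Real.sqrt (2 * Real.pi) ≠ 0 := by positivity
  field_simp


/-! ### the centered product variable -/

variable {n : ℕ}

/-- centered entry variable -/
def vij (i j : Fin n) (r : Fin n → ℝ) : ℝ := r i * r j - (if i = j then 1 else 0)

/-- row measure -/
noncomputable def rowM (n : ℕ) : Measure (Fin n → ℝ) :=
  Measure.pi fun _ : Fin n => gaussianReal 0 1

instance : IsProbabilityMeasure (rowM n) := by
  unfold rowM; infer_instance

lemma prod_one_special {M : Type*} [CommMonoid M] {i : Fin n} (g : Fin n → M)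
    (hg : ∀ k, k ≠ i → g k = 1) : ∏ k, g k = g i :=
  Finset.prod_eq_single i (fun b _ hb => hg b hb) (fun h => absurd (Finset.mem_univ i) h)

lemma prod_two_special {M : Type*} [CommMonoid M] {i j : Fin n} (hij : i ≠ j) (g : Fin n → M)
    (hg : ∀ k, k ≠ i → k ≠ j → g k = 1) : ∏ k, g k = g i * g j := by
  classical
  rw [← Finset.mul_prod_erase Finset.univ g (Finset.mem_univ i)]
  rw [← Finset.mul_prod_erase _ g (Finset.mem_erase.mpr ⟨Ne.symm hij, Finset.mem_univ j⟩)]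
  rw [Finset.prod_eq_one]
  · rw [mul_one]
  · intro k hk
    simp only [Finset.mem_erase] at hk
    exact hg k hk.2.1 hk.1

lemma integrable_sq_sub_one_pow (m : ℕ) :
    Integrable (fun x : ℝ => (x ^ 2 - 1) ^ m) (gaussianReal 0 1) := by
  have hb : Integrable (fun x : ℝ => (2:ℝ) ^ m * (x ^ (2*m) + 1)) (gaussianReal 0 1) := by
    exact ((integrable_pow_gauss (2*m)).add (integrable_const 1)).const_mul _
  apply hb.mono'
  · apply Measurable.aestronglyMeasurable
    exact ((measurable_id.pow_const 2).sub_const 1).pow_const m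
  · filter_upwards with x
    rw [Real.norm_eq_abs, abs_pow]
    have h1 : |x ^ 2 - 1| ≤ x ^ 2 + 1 := by
      rw [abs_le]; constructor <;> nlinarith [sq_nonneg x]
    calc |x ^ 2 - 1| ^ m ≤ (x ^ 2 + 1) ^ m := by
          apply pow_le_pow_left₀ (abs_nonneg _) h1
    _ ≤ (2:ℝ) ^ m * (x ^ (2*m) + 1) := by
        have h2 : (x ^ 2 + 1) ^ m ≤ (2 * max (x ^ 2) 1) ^ m := by
          apply pow_le_pow_left₀ (by positivity)
          rcases le_total (x ^ 2) 1 with h | h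
          · rw [max_eq_right h]; linarith
          · rw [max_eq_left h]; linarith
        calc (x ^ 2 + 1) ^ m ≤ (2 * max (x ^ 2) 1) ^ m := h2
        _ = 2 ^ m * (max (x ^ 2) 1) ^ m := by rw [mul_pow]
        _ ≤ 2 ^ m * (x ^ (2*m) + 1) := by
            apply mul_le_mul_of_nonneg_left _ (by positivity)
            rcases le_total (x ^ 2) 1 with h | h
            · rw [max_eq_right h, one_pow]
              have hx : (0:ℝ) ≤ x ^ (2*m) := by rw [pow_mul]; positivity
              linarith
            · rw [max_eq_left h, ← pow_mul]
              linarith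

lemma vij_pow_eq_prod_diag (i : Fin n) (m : ℕ) (r : Fin n → ℝ) :
    vij i i r ^ m = ∏ k, (fun k x => if k = i then (x ^ 2 - 1) ^ m else 1) k (r k) := by
  rw [prod_one_special (i := i) _ (fun k hk => by simp [hk])]
  simp [vij, sq]

lemma vij_pow_eq_prod_off {i j : Fin n} (hij : i ≠ j) (m : ℕ) (r : Fin n → ℝ) :
    vij i j r ^ m
      = ∏ k, (fun k x => if k = i then x ^ m else if k = j then x ^ m else 1) k (r k) := by
  rw [prod_two_special hij _ (fun k hk1 hk2 => by simp [hk1, hk2])]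
  simp [vij, hij, Ne.symm hij, mul_pow]

lemma integrable_vij_pow (i j : Fin n) (m : ℕ) :
    Integrable (fun r => vij i j r ^ m) (rowM n) := by
  classical
  rcases eq_or_ne i j with rfl | hij
  · have := integrable_pi_prod (ι := Fin n) (gaussianReal 0 1)
      (fun k x => if k = i then (x ^ 2 - 1) ^ m else 1) (fun k => ?_)
    · apply this.congr
      filter_upwards with r
      exact (vij_pow_eq_prod_diag i m r).symm
    · split_ifs
      · exact integrable_sq_sub_one_pow m
      · exact integrable_const 1
  · have := integrable_pi_prod (ι := Fin n) (gaussianReal 0 1)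
      (fun k x => if k = i then x ^ m else if k = j then x ^ m else 1) (fun k => ?_)
    · apply this.congr
      filter_upwards with r
      exact (vij_pow_eq_prod_off hij m r).symm
    · split_ifs
      · exact integrable_pow_gauss m
      · exact integrable_pow_gauss m
      · exact integrable_const 1

lemma integral_vij_pow_diag (i : Fin n) (m : ℕ) :
    ∫ r, vij i i r ^ m ∂(rowM n) = ∫ x, (x ^ 2 - 1) ^ m ∂(gaussianReal 0 1) := by
  classical
  rw [show (fun r => vij i i r ^ m)
      = fun r => ∏ k, (fun k x => if k = i then (x ^ 2 - 1) ^ m else 1) k (r k) from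
    funext (vij_pow_eq_prod_diag i m)]
  have hpi := integral_pi_prod (ι := Fin n) (gaussianReal 0 1)
    (fun k x => if k = i then (x ^ 2 - 1) ^ m else 1)
  rw [rowM, hpi]
  rw [prod_one_special (i := i) _ (fun k hk => by simp [hk])]
  simp

lemma integral_vij_pow_off {i j : Fin n} (hij : i ≠ j) (m : ℕ) :
    ∫ r, vij i j r ^ m ∂(rowM n)
      = (∫ x, x ^ m ∂(gaussianReal 0 1)) * (∫ x, x ^ m ∂(gaussianReal 0 1)) := by
  classical
  rw [show (fun r => vij i j r ^ m)
      = fun r => ∏ k, (fun k x => if k = i then x ^ m else if k = j then x ^ m else 1) k (r k)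
    from funext (vij_pow_eq_prod_off hij m)]
  have hpi := integral_pi_prod (ι := Fin n) (gaussianReal 0 1)
    (fun k x => if k = i then x ^ m else if k = j then x ^ m else 1)
  rw [rowM, hpi]
  rw [prod_two_special hij _ (fun k hk1 hk2 => by simp [hk1, hk2])]
  simp [hij, Ne.symm hij]

lemma integral_vij_zero (i j : Fin n) : ∫ r, vij i j r ^ 0 ∂(rowM n) = 1 := by
  simp

lemma integral_vij_one (i j : Fin n) : ∫ r, vij i j r ^ 1 ∂(rowM n) = 0 := by
  rcases eq_or_ne i j with rfl | hij
  · rw [integral_vij_pow_diag]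
    simp only [pow_one]
    rw [integral_sub (by simpa using integrable_pow_gauss 2) (integrable_const 1)]
    simp [gauss_second_moment]
  · rw [integral_vij_pow_off hij]
    simp only [pow_one]
    rw [gauss_mean_zero]
    simp

/-- uniform bound on the moment integrals -/
noncomputable def Mbd (i j : Fin n) : ℝ :=
  1 + ∑ m ∈ Finset.range 9, |∫ r, vij i j r ^ m ∂(rowM n)|

lemma one_le_Mbd (i j : Fin n) : 1 ≤ Mbd i j := by
  have : 0 ≤ ∑ m ∈ Finset.range 9, |∫ r, vij i j r ^ m ∂(rowM n)| :=
    Finset.sum_nonneg fun m _ => abs_nonneg _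
  simp only [Mbd]; linarith

lemma abs_integral_vij_le (i j : Fin n) {m : ℕ} (hm : m ≤ 8) :
    |∫ r, vij i j r ^ m ∂(rowM n)| ≤ Mbd i j := by
  have h1 : |∫ r, vij i j r ^ m ∂(rowM n)|
      ≤ ∑ m' ∈ Finset.range 9, |∫ r, vij i j r ^ m' ∂(rowM n)| :=
    Finset.single_le_sum (f := fun m' => |∫ r, vij i j r ^ m' ∂(rowM n)|)
      (fun m' _ => abs_nonneg _) (Finset.mem_range.mpr (by omega))
  simp only [Mbd]; linarith


/-! ### moment bound for the sum -/

section matrixlevel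
variable {p : ℕ} (i j : Fin n)

/-- centered inner product entry -/
def Dij (i j : Fin n) (Z : Fin p → Fin n → ℝ) : ℝ := ∑ k, vij i j (Z k)

/-- multiplicity of a tuple -/
def mult (κ : Fin 8 → Fin p) (k : Fin p) : ℕ := (Finset.univ.filter fun l => κ l = k).card

lemma sum_mult (κ : Fin 8 → Fin p) : ∑ k, mult κ k = 8 := by
  classical
  have h := Finset.card_eq_sum_card_fiberwise
    (f := κ) (s := Finset.univ) (t := Finset.univ) (fun x _ => Finset.mem_univ (κ x))
  simpa [mult] using h.symm

lemma mult_le_eight (κ : Fin 8 → Fin p) (k : Fin p) : mult κ k ≤ 8 := by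
  conv_rhs => rw [← sum_mult κ]
  exact Finset.single_le_sum (fun k _ => Nat.zero_le _) (Finset.mem_univ k)

lemma prod_pow_mult (g : Fin p → ℝ) (κ : Fin 8 → Fin p) :
    ∏ l, g (κ l) = ∏ k, g k ^ mult κ k := by
  classical
  rw [← Finset.prod_fiberwise_of_maps_to (g := κ)
    (fun l _ => Finset.mem_univ (κ l)) (fun l => g (κ l))]
  refine Finset.prod_congr rfl fun k _ => ?_
  rw [Finset.prod_congr rfl (fun l hl => by rw [(Finset.mem_filter.mp hl).2] :
      ∀ l ∈ Finset.univ.filter fun l => κ l = k, g (κ l) = g k),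
    Finset.prod_const, mult]

lemma Dij_expand (Z : Fin p → Fin n → ℝ) :
    Dij i j Z ^ 8 = ∑ κ ∈ Fintype.piFinset (fun _ : Fin 8 => (Finset.univ : Finset (Fin p))),
      ∏ k, vij i j (Z k) ^ mult κ k := by
  classical
  have h1 : Dij i j Z ^ 8 = ∏ _l : Fin 8, Dij i j Z := by
    rw [Finset.prod_const]; simp
  rw [h1]
  simp only [Dij]
  rw [Finset.prod_univ_sum]
  exact Finset.sum_congr rfl fun κ _ => prod_pow_mult (fun k => vij i j (Z k)) κ

lemma integrable_term (κ : Fin 8 → Fin p) :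
    Integrable (fun Z : Fin p → Fin n → ℝ => ∏ k, vij i j (Z k) ^ mult κ k)
      (Measure.pi fun _ : Fin p => rowM n) :=
  integrable_pi_prod (rowM n) (fun k r => vij i j r ^ mult κ k)
    (fun k => integrable_vij_pow i j (mult κ k))

lemma integrable_D8 :
    Integrable (fun Z : Fin p → Fin n → ℝ => Dij i j Z ^ 8)
      (Measure.pi fun _ : Fin p => rowM n) := by
  classical
  rw [show (fun Z : Fin p → Fin n → ℝ => Dij i j Z ^ 8)
      = fun Z => ∑ κ ∈ Fintype.piFinset (fun _ : Fin 8 => (Finset.univ : Finset (Fin p))),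
        ∏ k, vij i j (Z k) ^ mult κ k from funext (Dij_expand i j)]
  exact integrable_finset_sum _ (fun κ _ => integrable_term i j κ)

lemma card_supp_le (κ : Fin 8 → Fin p) (hκ : ∀ k, mult κ k ≠ 1) :
    (Finset.univ.filter fun k => mult κ k ≠ 0).card ≤ 4 := by
  classical
  have hsum : ∑ k ∈ Finset.univ.filter (fun k => mult κ k ≠ 0), mult κ k = 8 := by
    rw [Finset.sum_filter_of_ne (fun k _ hk => by simpa using hk)]
    exact sum_mult κ
  have h2 : (Finset.univ.filter fun k => mult κ k ≠ 0).card • 2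
      ≤ ∑ k ∈ Finset.univ.filter (fun k => mult κ k ≠ 0), mult κ k := by
    refine Finset.card_nsmul_le_sum _ _ _ fun k hk => ?_
    rw [Finset.mem_filter] at hk
    have := hκ k
    omega
  rw [hsum, smul_eq_mul] at h2
  omega

lemma moment8 (hp : 4 ≤ p) :
    ∫ Z, Dij i j Z ^ 8 ∂(Measure.pi fun _ : Fin p => rowM n)
      ≤ (p : ℝ) ^ 4 * 4 ^ 8 * Mbd i j ^ 4 := by
  classical
  set E8 := Fintype.piFinset (fun _ : Fin 8 => (Finset.univ : Finset (Fin p))) with hE8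
  rw [show (fun Z : Fin p → Fin n → ℝ => Dij i j Z ^ 8)
      = fun Z => ∑ κ ∈ E8, ∏ k, vij i j (Z k) ^ mult κ k from funext (Dij_expand i j)]
  rw [integral_finset_sum _ (fun κ _ => integrable_term i j κ)]
  set Iv : ℕ → ℝ := fun m => ∫ r, vij i j r ^ m ∂(rowM n) with hIv
  have hterm : ∀ κ : Fin 8 → Fin p,
      (∫ Z : Fin p → Fin n → ℝ, ∏ k, vij i j (Z k) ^ mult κ k
        ∂(Measure.pi fun _ : Fin p => rowM n)) = ∏ k, Iv (mult κ k) := by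
    intro κ
    exact integral_pi_prod (rowM n) (fun k r => vij i j r ^ mult κ k)
  rw [Finset.sum_congr rfl (fun κ _ => hterm κ)]
  set G := E8.filter (fun κ => ∀ k, mult κ k ≠ 1) with hG
  have hzer : ∀ κ ∈ E8, κ ∉ G → ∏ k, Iv (mult κ k) = 0 := by
    intro κ hκ hκG
    rw [hG, Finset.mem_filter] at hκG
    push_neg at hκG
    obtain ⟨k, hk⟩ := hκG hκ
    refine Finset.prod_eq_zero (Finset.mem_univ k) ?_
    rw [hk, hIv]
    exact integral_vij_one i j
  rw [← Finset.sum_subset (Finset.filter_subset _ _) hzer]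
  -- bound each good term by M^4
  have hM1 : (1:ℝ) ≤ Mbd i j := one_le_Mbd i j
  have hbound : ∀ κ ∈ G, ∏ k, Iv (mult κ k) ≤ Mbd i j ^ 4 := by
    intro κ hκ
    rw [hG, Finset.mem_filter] at hκ
    have hcard : (Finset.univ.filter fun k => mult κ k ≠ 0).card ≤ 4 :=
      card_supp_le κ hκ.2
    calc ∏ k, Iv (mult κ k) ≤ |∏ k, Iv (mult κ k)| := le_abs_self _
    _ = ∏ k, |Iv (mult κ k)| := by rw [Finset.abs_prod]
    _ ≤ ∏ k, (if mult κ k = 0 then 1 else Mbd i j) := by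
        refine Finset.prod_le_prod (fun k _ => abs_nonneg _) (fun k _ => ?_)
        by_cases h0 : mult κ k = 0
        · rw [if_pos h0, h0]
          have hone : Iv 0 = 1 := integral_vij_zero i j
          rw [hone]
          simp
        · rw [if_neg h0]
          exact abs_integral_vij_le i j (mult_le_eight κ k)
    _ = Mbd i j ^ (Finset.univ.filter fun k => ¬ (mult κ k = 0)).card := by
        rw [Finset.prod_ite]
        rw [Finset.prod_const, Finset.prod_const, one_pow, one_mul]
    _ ≤ Mbd i j ^ 4 := pow_le_pow_right₀ (by linarith) hcard
  have hGcard : (G.card : ℝ) ≤ (p : ℝ) ^ 4 * 4 ^ 8 := by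
    have hsub : G ⊆ (Finset.powersetCard 4 (Finset.univ : Finset (Fin p))).biUnion
        (fun T => Fintype.piFinset fun _ : Fin 8 => T) := by
      intro κ hκ
      rw [hG, Finset.mem_filter] at hκ
      have himeq : Finset.image κ Finset.univ = Finset.univ.filter fun k => mult κ k ≠ 0 := by
        ext k
        simp only [Finset.mem_image, Finset.mem_filter, Finset.mem_univ, true_and]
        constructor
        · rintro ⟨l, rfl⟩
          exact Finset.card_ne_zero_of_mem (Finset.mem_filter.mpr ⟨Finset.mem_univ l, rfl⟩)
        · intro hk
          obtain ⟨l, hl⟩ := Finset.card_pos.mp (Nat.pos_of_ne_zero hk)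
          exact ⟨l, (Finset.mem_filter.mp hl).2⟩
      have hc4 : (Finset.image κ Finset.univ).card ≤ 4 := by
        rw [himeq]; exact card_supp_le κ hκ.2
      obtain ⟨T, hT1, hT2⟩ := Finset.exists_superset_card_eq hc4
        (by simpa [Fintype.card_fin] using hp)
      refine Finset.mem_biUnion.mpr ⟨T, Finset.mem_powersetCard_univ.mpr hT2, ?_⟩
      exact Fintype.mem_piFinset.mpr
        (fun l => hT1 (Finset.mem_image_of_mem κ (Finset.mem_univ l)))
    have hnat : G.card ≤ p ^ 4 * 4 ^ 8 := by
      calc G.card ≤ ((Finset.powersetCard 4 (Finset.univ : Finset (Fin p))).biUnion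
          (fun T => Fintype.piFinset fun _ : Fin 8 => T)).card := Finset.card_le_card hsub
      _ ≤ ∑ T ∈ Finset.powersetCard 4 (Finset.univ : Finset (Fin p)),
            (Fintype.piFinset fun _ : Fin 8 => T).card := Finset.card_biUnion_le
      _ ≤ ∑ _T ∈ Finset.powersetCard 4 (Finset.univ : Finset (Fin p)), 4 ^ 8 := by
          refine Finset.sum_le_sum fun T hT => ?_
          rw [Fintype.card_piFinset]
          rw [Finset.prod_const, Finset.card_univ, Fintype.card_fin]
          have := (Finset.mem_powersetCard.mp hT).2
          exact Nat.pow_le_pow_left (le_of_eq this) 8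
      _ = (Finset.powersetCard 4 (Finset.univ : Finset (Fin p))).card * 4 ^ 8 := by
          rw [Finset.sum_const, smul_eq_mul]
      _ ≤ p ^ 4 * 4 ^ 8 := by
          apply Nat.mul_le_mul_right
          rw [Finset.card_powersetCard, Finset.card_univ, Fintype.card_fin]
          exact Nat.choose_le_pow p 4
    calc (G.card : ℝ) ≤ ((p ^ 4 * 4 ^ 8 : ℕ) : ℝ) := Nat.cast_le.mpr hnat
    _ = (p : ℝ) ^ 4 * 4 ^ 8 := by push_cast; ring
  calc ∑ κ ∈ G, ∏ k, Iv (mult κ k) ≤ G.card • (Mbd i j ^ 4) :=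
    Finset.sum_le_card_nsmul G _ _ hbound
  _ = (G.card : ℝ) * Mbd i j ^ 4 := nsmul_eq_mul _ _
  _ ≤ (p : ℝ) ^ 4 * 4 ^ 8 * Mbd i j ^ 4 := by
      apply mul_le_mul_of_nonneg_right hGcard
      positivity

lemma Dij_eq (i j : Fin n) (Z : Matrix (Fin p) (Fin n) ℝ) :
    Dij i j Z = (Zᵀ * Z) i j - (if i = j then (p : ℝ) else 0) := by
  have h1 : (Zᵀ * Z) i j = ∑ k, Z k i * Z k j := by
    rw [Matrix.mul_apply]
    exact Finset.sum_congr rfl fun k _ => by rw [Matrix.transpose_apply]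
  have h2 : (∑ _k : Fin p, (if i = j then (1:ℝ) else 0)) = (if i = j then (p:ℝ) else 0) := by
    by_cases h : i = j <;> simp [h]
  unfold Dij vij
  rw [Finset.sum_sub_distrib, ← h1, h2]

lemma badprob (hn : 0 < n) (hp : 4 ≤ p) :
    ((Measure.pi fun _ : Fin p => rowM n)
        {Z : Fin p → Fin n → ℝ | (p : ℝ) / (2 * n) < |Dij i j Z|}).toReal
      ≤ (Mbd i j ^ 4 * 4 ^ 8 * (2 * n) ^ 8) / p ^ 4 := by
  classical
  haveI : IsProbabilityMeasure (Measure.pi fun _ : Fin p => rowM n) := by infer_instance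
  set μp := Measure.pi fun _ : Fin p => rowM n with hμp
  have hp0 : (0:ℝ) < p := by
    have : (4:ℝ) ≤ p := by exact_mod_cast hp
    linarith
  have hn0 : (0:ℝ) < n := by exact_mod_cast hn
  set ε : ℝ := (p : ℝ) / (2 * n) with hε
  have hεpos : 0 < ε := by positivity
  have hsub : {Z : Fin p → Fin n → ℝ | ε < |Dij i j Z|}
      ⊆ {Z : Fin p → Fin n → ℝ | ε ^ 8 ≤ Dij i j Z ^ 8} := by
    intro Z hZ
    simp only [Set.mem_setOf_eq] at hZ ⊢
    calc ε ^ 8 ≤ |Dij i j Z| ^ 8 := pow_le_pow_left₀ hεpos.le hZ.le 8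
    _ = |Dij i j Z ^ 8| := pow_abs _ 8
    _ = Dij i j Z ^ 8 := abs_of_nonneg (Even.pow_nonneg (by decide) _)
  have hmar := mul_meas_ge_le_integral_of_nonneg
    (μ := μp) (f := fun Z => Dij i j Z ^ 8)
    (Filter.Eventually.of_forall fun Z => Even.pow_nonneg (by decide) _)
    (integrable_D8 i j) (ε ^ 8)
  have hmom := moment8 i j hp
  have hmono : (μp {Z : Fin p → Fin n → ℝ | ε < |Dij i j Z|}).toReal
      ≤ (μp {Z : Fin p → Fin n → ℝ | ε ^ 8 ≤ Dij i j Z ^ 8}).toReal := by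
    apply ENNReal.toReal_mono (measure_ne_top μp _)
    exact measure_mono hsub
  have hεp : (0:ℝ) < ε ^ 8 := by positivity
  have key : (μp {Z : Fin p → Fin n → ℝ | ε < |Dij i j Z|}).toReal
      ≤ ((p : ℝ) ^ 4 * 4 ^ 8 * Mbd i j ^ 4) / ε ^ 8 := by
    rw [le_div_iff₀ hεp]
    calc (μp {Z : Fin p → Fin n → ℝ | ε < |Dij i j Z|}).toReal * ε ^ 8
        ≤ (μp {Z : Fin p → Fin n → ℝ | ε ^ 8 ≤ Dij i j Z ^ 8}).toReal * ε ^ 8 :=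
          mul_le_mul_of_nonneg_right hmono hεp.le
    _ = ε ^ 8 * (μp {Z : Fin p → Fin n → ℝ | ε ^ 8 ≤ Dij i j Z ^ 8}).toReal := by ring
    _ ≤ ∫ Z, Dij i j Z ^ 8 ∂μp := hmar
    _ ≤ (p : ℝ) ^ 4 * 4 ^ 8 * Mbd i j ^ 4 := hmom
  calc (μp {Z : Fin p → Fin n → ℝ | ε < |Dij i j Z|}).toReal
      ≤ ((p : ℝ) ^ 4 * 4 ^ 8 * Mbd i j ^ 4) / ε ^ 8 := key
  _ = (Mbd i j ^ 4 * 4 ^ 8 * (2 * n) ^ 8) / p ^ 4 := by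
      have hpne : (p:ℝ) ≠ 0 := ne_of_gt hp0
      have hnne : (n:ℝ) ≠ 0 := ne_of_gt hn0
      rw [hε]
      field_simp

end matrixlevel
end RMT

theorem stmt7 {n : ℕ} (hn : 0 < n) (S : Matrix (Fin n) (Fin n) ℝ) (hS : S.PosDef)
    {α : ℝ} (hα : 0 < α) :
    ∃ C : ℝ, 0 < C ∧ ∃ p₀ : ℕ, ∀ p : ℕ, p₀ ≤ p →
      (∫ X, ((S * (Xᵀ * X + α • 1)⁻¹ ^ 2) ^ 2).trace ∂(gaussianRowsMatrix p n S hS))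
        ≤ C / (p : ℝ) ^ 4 := by
  classical
  haveI : Nonempty (Fin n) := ⟨⟨0, hn⟩⟩
  obtain ⟨i₀, -, hmin⟩ := Finset.exists_min_image Finset.univ hS.1.eigenvalues
    Finset.univ_nonempty
  set c := hS.1.eigenvalues i₀ with hcdef
  have hc : 0 < c := hS.eigenvalues_pos i₀
  have hcS : (S - c • (1 : Matrix (Fin n) (Fin n) ℝ)).PosSemidef :=
    RMT.sub_smul_one_psd hS.1 (fun i => hmin i (Finset.mem_univ i))
  have hs0 : 0 ≤ S.trace := RMT.trace_nonneg' hS.posSemidef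
  set K : ℝ := n * S.trace ^ 2 / ((c / 2) ^ 4) with hK
  set Dc : ℝ := n * S.trace ^ 2 / α ^ 4 with hDc
  set CB : ℝ := ∑ i : Fin n, ∑ j : Fin n,
    ((RMT.Mbd i j : ℝ) ^ 4 * 4 ^ 8 * (2 * n) ^ 8) with hCB
  have hK0 : 0 ≤ K := by positivity
  have hDc0 : 0 ≤ Dc := by positivity
  have hCB0 : 0 ≤ CB := by
    refine Finset.sum_nonneg fun i _ => Finset.sum_nonneg fun j _ => ?_
    positivity
  refine ⟨K + Dc * CB + 1, by nlinarith, 4, fun p hp => ?_⟩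
  have hp0 : 0 < p := lt_of_lt_of_le (by norm_num) hp
  have hppos : (0:ℝ) < (p:ℝ) ^ 4 := by positivity
  have hprob : IsProbabilityMeasure (Measure.pi fun _ : Fin p => RMT.rowM n) :=
    inferInstance
  haveI : IsProbabilityMeasure (stdGaussianMatrix p n) := hprob
  set R := RMT.sqrtM hS with hR
  have hmap : gaussianRowsMatrix p n S hS
      = (stdGaussianMatrix p n).map (fun Z => Z * R) := rfl
  have hTmeas : Measurable (fun Z : Matrix (Fin p) (Fin n) ℝ => Z * R) :=
    (continuous_id.matrix_mul continuous_const).measurable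
  have hfmeas : Measurable (fun X : Matrix (Fin p) (Fin n) ℝ =>
      ((S * ((Xᵀ * X + α • (1 : Matrix (Fin n) (Fin n) ℝ))⁻¹) ^ 2) ^ 2).trace) := by
    have h1 : Continuous (fun X : Matrix (Fin p) (Fin n) ℝ =>
        Xᵀ * X + α • (1 : Matrix (Fin n) (Fin n) ℝ)) :=
      ((continuous_id.matrix_transpose).matrix_mul continuous_id).add continuous_const
    have h2 : Measurable (fun A : Matrix (Fin n) (Fin n) ℝ => A⁻¹) := by
      have h : (fun A : Matrix (Fin n) (Fin n) ℝ => A⁻¹)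
          = fun A => (A.det)⁻¹ • A.adjugate := by
        funext A; rw [Matrix.inv_def, Ring.inverse_eq_inv']
      rw [h]
      refine measurable_pi_lambda _ (fun i => measurable_pi_lambda _ (fun j => ?_))
      show Measurable fun A : Matrix (Fin n) (Fin n) ℝ => (A.det)⁻¹ * A.adjugate i j
      exact ((continuous_id.matrix_det).measurable.inv).mul
        ((continuous_id.matrix_adjugate.matrix_elem i j).measurable)
    have h3 : Continuous (fun B : Matrix (Fin n) (Fin n) ℝ => ((S * B ^ 2) ^ 2).trace) := by
      simp only [pow_two]
      exact (((continuous_const.matrix_mul (continuous_id.matrix_mul continuous_id)).matrix_mul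
        (continuous_const.matrix_mul (continuous_id.matrix_mul continuous_id)))).matrix_trace
    exact h3.measurable.comp (h2.comp h1.measurable)
  rw [hmap, integral_map hTmeas.aemeasurable hfmeas.aestronglyMeasurable]
  set ε : ℝ := (p : ℝ) / (2 * n) with hε
  set Bad : Set (Matrix (Fin p) (Fin n) ℝ)
    := ⋃ i : Fin n, ⋃ j : Fin n, {Z | ε < |RMT.Dij i j Z|} with hBad
  have hDcont : ∀ i j : Fin n,
      Continuous (fun Z : Matrix (Fin p) (Fin n) ℝ => RMT.Dij i j Z) := by
    intro i j
    unfold RMT.Dij RMT.vij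
    apply continuous_finset_sum
    intro k _
    exact ((continuous_apply_apply k i).mul
      (continuous_apply_apply k j)).sub continuous_const
  have hBadMeas : MeasurableSet Bad :=
    MeasurableSet.iUnion fun i => MeasurableSet.iUnion fun j =>
      measurableSet_lt measurable_const (hDcont i j).measurable.abs
  have hpt : ∀ Z : Matrix (Fin p) (Fin n) ℝ,
      ((S * (((Z * R)ᵀ * (Z * R) + α • (1 : Matrix (Fin n) (Fin n) ℝ))⁻¹) ^ 2) ^ 2).trace
        ≤ K / (p:ℝ) ^ 4 + Dc * Set.indicator Bad (fun _ => (1:ℝ)) Z := by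
    intro Z
    by_cases hZ : Z ∈ Bad
    · rw [Set.indicator_of_mem hZ]
      have h2 := (RMT.pointwise_all hS hα Z).2
      have h3 : 0 ≤ K / (p:ℝ) ^ 4 := by positivity
      rw [hDc] at *
      calc ((S * (((Z * R)ᵀ * (Z * R) + α • (1 : Matrix (Fin n) (Fin n) ℝ))⁻¹) ^ 2) ^ 2).trace
          ≤ n * S.trace ^ 2 / α ^ 4 := h2
      _ ≤ K / (p:ℝ) ^ 4 + n * S.trace ^ 2 / α ^ 4 * 1 := by linarith
    · rw [Set.indicator_of_notMem hZ, mul_zero, add_zero]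
      have hE : ∀ i j : Fin n,
          |(Zᵀ * Z) i j - (if i = j then (p : ℝ) else 0)| ≤ (p : ℝ) / (2 * n) := by
        intro i j
        have hmem : Z ∉ {Z : Matrix (Fin p) (Fin n) ℝ | ε < |RMT.Dij i j Z|} := fun hmem =>
          hZ (Set.mem_iUnion.mpr ⟨i, Set.mem_iUnion.mpr ⟨j, hmem⟩⟩)
        simp only [Set.mem_setOf_eq, not_lt] at hmem
        rw [← RMT.Dij_eq i j Z]
        exact hmem
      have hg := RMT.pointwise_good hn hp0 hS hα hc hcS Z hE
      calc ((S * (((Z * R)ᵀ * (Z * R) + α • (1 : Matrix (Fin n) (Fin n) ℝ))⁻¹) ^ 2) ^ 2).trace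
          ≤ n * S.trace ^ 2 / ((c / 2) ^ 4 * (p:ℝ) ^ 4) := hg
      _ = K / (p:ℝ) ^ 4 := by rw [hK, div_div]
  have hint1 : Integrable (fun Z : Matrix (Fin p) (Fin n) ℝ =>
      ((S * (((Z * R)ᵀ * (Z * R) + α • (1 : Matrix (Fin n) (Fin n) ℝ))⁻¹) ^ 2) ^ 2).trace)
      (stdGaussianMatrix p n) := by
    refine Integrable.mono' (integrable_const Dc)
      ((hfmeas.comp hTmeas).aestronglyMeasurable) ?_
    filter_upwards with Z
    rw [Real.norm_eq_abs, abs_of_nonneg ((RMT.pointwise_all hS hα Z).1)]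
    exact (RMT.pointwise_all hS hα Z).2
  have hint2 : Integrable (fun Z : Matrix (Fin p) (Fin n) ℝ =>
      K / (p:ℝ) ^ 4 + Dc * Set.indicator Bad (fun _ => (1:ℝ)) Z) (stdGaussianMatrix p n) := by
    exact (integrable_const _).add (((integrable_const 1).indicator hBadMeas).const_mul Dc)
  have hmono := integral_mono hint1 hint2 hpt
  have hrhs : ∫ Z, (K / (p:ℝ) ^ 4 + Dc * Set.indicator Bad (fun _ => (1:ℝ)) Z)
      ∂(stdGaussianMatrix p n)
      = K / (p:ℝ) ^ 4 + Dc * ((stdGaussianMatrix p n) Bad).toReal := by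
    rw [integral_add (integrable_const _)
      (((integrable_const 1).indicator hBadMeas).const_mul Dc)]
    rw [integral_const]
    rw [integral_const_mul, integral_indicator_const (1:ℝ) hBadMeas]
    simp [Measure.real]
  have hBadBound : ((stdGaussianMatrix p n) Bad).toReal ≤ CB / (p:ℝ) ^ 4 := by
    have hsub : (stdGaussianMatrix p n) Bad
        ≤ ∑ i : Fin n, ∑ j : Fin n,
          (stdGaussianMatrix p n) {Z : Matrix (Fin p) (Fin n) ℝ | ε < |RMT.Dij i j Z|} := by
      rw [hBad]
      calc (stdGaussianMatrix p n) (⋃ i : Fin n, ⋃ j : Fin n,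
            {Z : Matrix (Fin p) (Fin n) ℝ | ε < |RMT.Dij i j Z|})
          ≤ ∑' i : Fin n, (stdGaussianMatrix p n)
              (⋃ j : Fin n, {Z : Matrix (Fin p) (Fin n) ℝ | ε < |RMT.Dij i j Z|}) :=
            measure_iUnion_le _
      _ = ∑ i : Fin n, (stdGaussianMatrix p n)
              (⋃ j : Fin n, {Z : Matrix (Fin p) (Fin n) ℝ | ε < |RMT.Dij i j Z|}) :=
            tsum_fintype _
      _ ≤ ∑ i : Fin n, ∑ j : Fin n,
            (stdGaussianMatrix p n) {Z : Matrix (Fin p) (Fin n) ℝ | ε < |RMT.Dij i j Z|} := by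
          refine Finset.sum_le_sum fun i _ => ?_
          calc (stdGaussianMatrix p n)
                (⋃ j : Fin n, {Z : Matrix (Fin p) (Fin n) ℝ | ε < |RMT.Dij i j Z|})
              ≤ ∑' j : Fin n, (stdGaussianMatrix p n)
                  {Z : Matrix (Fin p) (Fin n) ℝ | ε < |RMT.Dij i j Z|} := measure_iUnion_le _
          _ = ∑ j : Fin n, (stdGaussianMatrix p n)
                  {Z : Matrix (Fin p) (Fin n) ℝ | ε < |RMT.Dij i j Z|} := tsum_fintype _
    have hne : ∀ i ∈ (Finset.univ : Finset (Fin n)),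
        (∑ j : Fin n, (stdGaussianMatrix p n)
          {Z : Matrix (Fin p) (Fin n) ℝ | ε < |RMT.Dij i j Z|}) ≠ ⊤ :=
      fun i _ => ENNReal.sum_ne_top.mpr fun j _ => measure_ne_top _ _
    calc ((stdGaussianMatrix p n) Bad).toReal
        ≤ (∑ i : Fin n, ∑ j : Fin n, (stdGaussianMatrix p n)
            {Z : Matrix (Fin p) (Fin n) ℝ | ε < |RMT.Dij i j Z|}).toReal := by
          apply ENNReal.toReal_mono _ hsub
          exact ENNReal.sum_ne_top.mpr hne
    _ = ∑ i : Fin n, ∑ j : Fin n, ((stdGaussianMatrix p n)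
            {Z : Matrix (Fin p) (Fin n) ℝ | ε < |RMT.Dij i j Z|}).toReal := by
          rw [ENNReal.toReal_sum hne]
          exact Finset.sum_congr rfl fun i _ =>
            ENNReal.toReal_sum fun j _ => measure_ne_top _ _
    _ ≤ ∑ i : Fin n, ∑ j : Fin n, ((RMT.Mbd i j : ℝ) ^ 4 * 4 ^ 8 * (2 * n) ^ 8) / (p:ℝ) ^ 4 := by
          refine Finset.sum_le_sum fun i _ => Finset.sum_le_sum fun j _ => ?_
          exact RMT.badprob i j hn hp
    _ = CB / (p:ℝ) ^ 4 := by
          rw [hCB, Finset.sum_div]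
          exact Finset.sum_congr rfl fun i _ => (Finset.sum_div _ _ _).symm
  calc ∫ Z, ((S * (((Z * R)ᵀ * (Z * R)
        + α • (1 : Matrix (Fin n) (Fin n) ℝ))⁻¹) ^ 2) ^ 2).trace ∂(stdGaussianMatrix p n)
      ≤ K / (p:ℝ) ^ 4 + Dc * ((stdGaussianMatrix p n) Bad).toReal := by rw [← hrhs]; exact hmono
  _ ≤ K / (p:ℝ) ^ 4 + Dc * (CB / (p:ℝ) ^ 4) := by
      exact add_le_add_right (mul_le_mul_of_nonneg_left hBadBound hDc0) _
  _ = (K + Dc * CB) / (p:ℝ) ^ 4 := by rw [← mul_div_assoc, ← add_div]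
  _ ≤ (K + Dc * CB + 1) / (p:ℝ) ^ 4 := by
      exact (div_le_div_iff_of_pos_right hppos).mpr (by linarith)
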